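/- Let E be a finite-dimensional real Banach space, let k ∈ ℕ, let ε > 0, and let f : E* → ℝ be a nonnegative positively homogeneous function with ‖f‖_{FBL[E]} < ∞. Then there exists a continuous, nonnegative, positively homogeneous function g : E* → ℝ such that f ≤ g pointwise and ‖g‖_{FBL_k[E]} ≤ (1+ε)·‖f‖_{FBL_k[E]}. -/

import Mathlib

open scoped ENNReal

/-- `‖f‖_{FBL_k[E]}`: the `k`-vector free Banach lattice norm of a positively homogeneous
function `f : E* → ℝ`, with values in `[0,∞]`. -/
noncomputable def fblNormK (E : Type*) [NormedAddCommGroup E] [NormedSpace ℝ E]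
    (k : ℕ) (f : (E →L[ℝ] ℝ) → ℝ) : ℝ≥0∞ :=
  ⨆ (x : Fin k → (E →L[ℝ] ℝ)) (_ : ∀ v : E, ‖v‖ ≤ 1 → ∑ i, |x i v| ≤ 1),
    ENNReal.ofReal (∑ i, |f (x i)|)

/-- `‖f‖_{FBL[E]} = sup_k ‖f‖_{FBL_k[E]}`. -/
noncomputable def fblNorm (E : Type*) [NormedAddCommGroup E] [NormedSpace ℝ E]
    (f : (E →L[ℝ] ℝ) → ℝ) : ℝ≥0∞ :=
  ⨆ k : ℕ, fblNormK E k f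

set_option maxHeartbeats 1000000 in
/-- **Lemma.** Over a finite-dimensional Banach space `E`, every nonnegative positively
homogeneous `f : E* → ℝ` of finite FBL-norm admits, for each `k ∈ ℕ` and `ε > 0`, a
continuous nonnegative positively homogeneous majorant `g ≥ f` with
`‖g‖_{FBL_k[E]} ≤ (1+ε) ‖f‖_{FBL_k[E]}`. -/
theorem exists_continuous_majorant_fblNormK
    (E : Type*) [NormedAddCommGroup E] [NormedSpace ℝ E] [FiniteDimensional ℝ E]
    (k : ℕ) (ε : ℝ) (hε : 0 < ε)
    (f : (E →L[ℝ] ℝ) → ℝ)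
    (hnn : ∀ y : E →L[ℝ] ℝ, 0 ≤ f y)
    (hph : ∀ t : ℝ, 0 ≤ t → ∀ y : E →L[ℝ] ℝ, f (t • y) = t * f y)
    (hfin : fblNorm E f ≠ ⊤) :
    ∃ g : (E →L[ℝ] ℝ) → ℝ, Continuous g ∧ (∀ y, 0 ≤ g y) ∧
      (∀ t : ℝ, 0 ≤ t → ∀ y : E →L[ℝ] ℝ, g (t • y) = t * g y) ∧
      (∀ y, f y ≤ g y) ∧
      fblNormK E k g ≤ ENNReal.ofReal (1 + ε) * fblNormK E k f := by
  classical
  have hK : ∀ m : ℕ, fblNormK E m f ≠ ⊤ := fun m =>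
    ne_top_of_le_ne_top hfin (le_iSup (fun m => fblNormK E m f) m)
  set N : ℝ := (fblNorm E f).toReal with hNdef
  have hN0 : (0:ℝ) ≤ N := ENNReal.toReal_nonneg
  set C : ℝ := N + 1 with hCdef
  have hC0 : (0:ℝ) < C := by positivity
  have hf0 : f 0 = 0 := by
    have := hph 0 le_rfl 0
    simpa using this
  -- f is bounded: f y ≤ N * ‖y‖
  have h1 : ∀ u : E →L[ℝ] ℝ, ‖u‖ ≤ 1 → f u ≤ N := by
    intro u hu
    have hx : ∀ v : E, ‖v‖ ≤ 1 → ∑ i : Fin 1, |(![u] i) v| ≤ 1 := by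
      intro v hv
      have : |u v| ≤ ‖u‖ * ‖v‖ := u.le_opNorm v
      have h2 : ‖u‖ * ‖v‖ ≤ 1 := mul_le_one₀ hu (norm_nonneg v) hv
      simpa using this.trans h2
    have hle : ENNReal.ofReal (∑ i : Fin 1, |f ((![u]) i)|) ≤ fblNormK E 1 f := by
      rw [fblNormK]
      exact le_iSup₂_of_le ![u] hx le_rfl
    have hle2 : ENNReal.ofReal (f u) ≤ ENNReal.ofReal N := by
      have h3 : fblNormK E 1 f ≤ fblNorm E f := le_iSup (fun m => fblNormK E m f) 1
      have h4 : fblNorm E f = ENNReal.ofReal N := (ENNReal.ofReal_toReal hfin).symm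
      calc ENNReal.ofReal (f u) = ENNReal.ofReal (∑ i : Fin 1, |f ((![u]) i)|) := by
              simp [abs_of_nonneg (hnn u)]
        _ ≤ fblNormK E 1 f := hle
        _ ≤ ENNReal.ofReal N := h4 ▸ h3
    exact (ENNReal.ofReal_le_ofReal_iff hN0).mp hle2
  have hfb : ∀ y : E →L[ℝ] ℝ, f y ≤ N * ‖y‖ := by
    intro y
    rcases eq_or_ne y 0 with rfl | hy
    · simp [hf0]
    · have hny : (0:ℝ) < ‖y‖ := norm_pos_iff.mpr hy
      have hu : ‖(‖y‖⁻¹ • y : E →L[ℝ] ℝ)‖ ≤ 1 := by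
        have h := norm_smul (‖y‖⁻¹) y
        rw [h, norm_inv, norm_norm, inv_mul_cancel₀ hny.ne']
      have := h1 _ hu
      have hrw : f y = ‖y‖ * f (‖y‖⁻¹ • y) := by
        rw [← hph ‖y‖ (norm_nonneg y) (‖y‖⁻¹ • y), smul_smul, mul_inv_cancel₀ hny.ne',
          one_smul]
      rw [hrw, mul_comm N ‖y‖]
      exact mul_le_mul_of_nonneg_left this hny.le
  have hfC : ∀ y : E →L[ℝ] ℝ, f y ≤ C * ‖y‖ := by
    intro y
    refine (hfb y).trans ?_
    have := norm_nonneg y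
    nlinarith
  -- the sup-convolution majorant
  set g : (E →L[ℝ] ℝ) → ℝ := fun x => ⨆ y, (f y - C * ‖x - y‖) with hgdef
  have hbdd : ∀ x : E →L[ℝ] ℝ, BddAbove (Set.range fun y => f y - C * ‖x - y‖) := by
    intro x
    refine ⟨C * ‖x‖, ?_⟩
    rintro _ ⟨y, rfl⟩
    show f y - C * ‖x - y‖ ≤ C * ‖x‖
    have h2 : ‖y‖ ≤ ‖x‖ + ‖x - y‖ := by
      have := norm_sub_norm_le x y
      have h3 := norm_sub_rev x y
      nlinarith [abs_norm_sub_norm_le x y, abs_le.mp (abs_norm_sub_norm_le x y)]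
    have := hfC y
    nlinarith
  have hle : ∀ (x y : E →L[ℝ] ℝ), f y - C * ‖x - y‖ ≤ g x := fun x y =>
    le_ciSup (hbdd x) y
  have hgle : ∀ (x : E →L[ℝ] ℝ) (B : ℝ), (∀ y, f y - C * ‖x - y‖ ≤ B) → g x ≤ B :=
    fun x B h => ciSup_le h
  have hfg : ∀ x, f x ≤ g x := by
    intro x
    have := hle x x
    simpa using this
  have hg0 : ∀ x, 0 ≤ g x := fun x => (hnn x).trans (hfg x)
  -- Lipschitz continuity
  have hlip : ∀ x x' : E →L[ℝ] ℝ, g x ≤ g x' + C * ‖x - x'‖ := by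
    intro x x'
    refine hgle x _ fun y => ?_
    have h2 : ‖x' - y‖ ≤ ‖x - y‖ + ‖x - x'‖ := by
      have := norm_sub_le_norm_sub_add_norm_sub x' x y
      calc ‖x' - y‖ ≤ ‖x' - x‖ + ‖x - y‖ := norm_sub_le_norm_sub_add_norm_sub x' x y
        _ = ‖x - y‖ + ‖x - x'‖ := by rw [norm_sub_rev x' x]; ring
    have := hle x' y
    nlinarith
  have hcont : Continuous g := by
    have : LipschitzWith ⟨C, hC0.le⟩ g := by
      refine LipschitzWith.of_dist_le_mul fun x x' => ?_
      rw [Real.dist_eq, dist_eq_norm]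
      rw [abs_le]
      constructor
      · have := hlip x' x
        have h3 := norm_sub_rev x x'
        change -(C * _) ≤ _
        nlinarith
      · have := hlip x x'
        change _ ≤ C * _
        nlinarith
    exact this.continuous
  -- positive homogeneity
  have hgz : g 0 = 0 := by
    refine le_antisymm (hgle 0 0 fun y => ?_) ?_
    · have := hfC y
      have h2 : ‖(0:E →L[ℝ] ℝ) - y‖ = ‖y‖ := by rw [zero_sub, norm_neg]
      nlinarith
    · have := hfg 0
      rw [hf0] at this
      exact this
  have hgh : ∀ t : ℝ, 0 ≤ t → ∀ x : E →L[ℝ] ℝ, g (t • x) = t * g x := by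
    intro t ht x
    rcases eq_or_lt_of_le ht with rfl | ht
    · simp [hgz]
    refine le_antisymm ?_ ?_
    · refine hgle _ _ fun y => ?_
      have hy : f y = t * f (t⁻¹ • y) := by
        rw [← hph t ht.le (t⁻¹ • y), smul_smul, mul_inv_cancel₀ ht.ne', one_smul]
      have hn : ‖t • x - y‖ = t * ‖x - t⁻¹ • y‖ := by
        have : t • x - y = t • (x - t⁻¹ • y) := by
          rw [smul_sub, smul_smul, mul_inv_cancel₀ ht.ne', one_smul]
        rw [this]
        have h := norm_smul t (x - t⁻¹ • y)
        rw [h, Real.norm_eq_abs, abs_of_pos ht]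
      rw [hy, hn]
      have := hle x (t⁻¹ • y)
      nlinarith
    · rw [mul_comm, ← le_div_iff₀ ht]
      refine hgle _ _ fun y => ?_
      rw [le_div_iff₀ ht, mul_comm]
      have hy : t * f y = f (t • y) := (hph t ht.le y).symm
      have hn : t * ‖x - y‖ = ‖t • x - t • y‖ := by
        rw [show t • x - t • y = t • (x - y) from (smul_sub t x y).symm]
        have h := norm_smul t (x - y)
        rw [h, Real.norm_eq_abs, abs_of_pos ht]
      calc t * (f y - C * ‖x - y‖) = f (t • y) - C * ‖t • x - t • y‖ := by
            rw [← hy, ← hn]; ring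
        _ ≤ g (t • x) := hle _ _
  -- norm estimate
  set Nk : ℝ := (fblNormK E k f).toReal with hNkdef
  have hNk0 : (0:ℝ) ≤ Nk := ENNReal.toReal_nonneg
  have hNkN : Nk ≤ N := ENNReal.toReal_mono hfin (le_iSup (fun m => fblNormK E m f) k)
  have hofk : fblNormK E k f = ENNReal.ofReal Nk := (ENNReal.ofReal_toReal (hK k)).symm
  have hmain : fblNormK E k g ≤ fblNormK E k f := by
    rw [fblNormK]
    refine iSup₂_le fun x hx => ?_
    rw [hofk]
    refine ENNReal.ofReal_le_ofReal ?_
    have habs : ∑ i, |g (x i)| = ∑ i, g (x i) :=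
      Finset.sum_congr rfl fun i _ => abs_of_nonneg (hg0 (x i))
    rw [habs]
    refine le_of_forall_pos_le_add fun η hη => ?_
    set δ : ℝ := η / (k + 1) with hδdef
    have hδ0 : (0:ℝ) < δ := by positivity
    have hch : ∀ i : Fin k, ∃ y, g (x i) - δ < f y - C * ‖x i - y‖ := by
      intro i
      have h2 : g (x i) - δ < g (x i) := by linarith
      exact exists_lt_of_lt_ciSup h2
    choose y hy using hch
    set s : ℝ := ∑ i, ‖x i - y i‖ with hsdef
    have hs0 : (0:ℝ) ≤ s := Finset.sum_nonneg fun i _ => norm_nonneg _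
    have hs1 : (0:ℝ) < 1 + s := by linarith
    -- the scaled family is admissible
    have hadm : ∀ v : E, ‖v‖ ≤ 1 → ∑ i, |((fun i => (1 + s)⁻¹ • y i) i) v| ≤ 1 := by
      intro v hv
      have hyx : ∀ i : Fin k, |(y i) v| ≤ |(x i) v| + ‖x i - y i‖ := by
        intro i
        have h2 : |(y i) v - (x i) v| ≤ ‖x i - y i‖ := by
          have h3 : |(y i - x i) v| ≤ ‖y i - x i‖ * ‖v‖ := (y i - x i).le_opNorm v
          have h4 : ‖y i - x i‖ * ‖v‖ ≤ ‖y i - x i‖ * 1 :=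
            mul_le_mul_of_nonneg_left hv (norm_nonneg _)
          have h6 := norm_sub_rev (y i) (x i)
          have h7 : (y i - x i) v = (y i) v - (x i) v := by
            simp [ContinuousLinearMap.sub_apply]
          rw [h7] at h3
          nlinarith
        have h8 : |(y i) v| ≤ |(x i) v| + |(y i) v - (x i) v| := by
          have := abs_add_le ((x i) v) ((y i) v - (x i) v)
          simpa using this
        linarith
      have hsum : ∑ i, |(y i) v| ≤ 1 + s := by
        calc ∑ i, |(y i) v| ≤ ∑ i, (|(x i) v| + ‖x i - y i‖) :=
              Finset.sum_le_sum fun i _ => hyx i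
          _ = (∑ i, |(x i) v|) + s := by rw [Finset.sum_add_distrib]
          _ ≤ 1 + s := by linarith [hx v hv]
      calc ∑ i, |((1 + s)⁻¹ • y i) v| = ∑ i, (1 + s)⁻¹ * |(y i) v| := by
            refine Finset.sum_congr rfl fun i _ => ?_
            rw [ContinuousLinearMap.smul_apply, smul_eq_mul, abs_mul,
              abs_of_pos (inv_pos.mpr hs1)]
        _ = (1 + s)⁻¹ * ∑ i, |(y i) v| := by rw [Finset.mul_sum]
        _ ≤ (1 + s)⁻¹ * (1 + s) := by
            exact mul_le_mul_of_nonneg_left hsum (inv_pos.mpr hs1).le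
        _ = 1 := inv_mul_cancel₀ hs1.ne'
    have hfy : ∑ i, f (y i) ≤ (1 + s) * Nk := by
      have hle2 : ENNReal.ofReal (∑ i, |f ((1 + s)⁻¹ • y i)|) ≤ fblNormK E k f := by
        rw [fblNormK]
        exact le_iSup₂_of_le (fun i => (1 + s)⁻¹ • y i) hadm le_rfl
      have heq : ∑ i, |f ((1 + s)⁻¹ • y i)| = (1 + s)⁻¹ * ∑ i, f (y i) := by
        rw [Finset.mul_sum]
        refine Finset.sum_congr rfl fun i _ => ?_
        rw [hph _ (inv_pos.mpr hs1).le,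
          abs_of_nonneg (mul_nonneg (inv_nonneg.mpr hs1.le) (hnn _))]
      rw [heq, hofk] at hle2
      have := (ENNReal.ofReal_le_ofReal_iff hNk0).mp hle2
      calc ∑ i, f (y i) = (1 + s) * ((1 + s)⁻¹ * ∑ i, f (y i)) := by
            rw [← mul_assoc, mul_inv_cancel₀ hs1.ne', one_mul]
        _ ≤ (1 + s) * Nk := mul_le_mul_of_nonneg_left this hs1.le
    have hkδ : (k:ℝ) * δ ≤ η := by
      have hk1 : (0:ℝ) < (k:ℝ) + 1 := by positivity
      rw [hδdef, mul_comm, div_mul_eq_mul_div, div_le_iff₀ hk1]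
      nlinarith [hη.le, Nat.cast_nonneg (α := ℝ) k]
    calc ∑ i, g (x i) ≤ ∑ i, (f (y i) - C * ‖x i - y i‖ + δ) :=
          Finset.sum_le_sum fun i _ => by linarith [hy i]
      _ = (∑ i, f (y i)) - C * s + k * δ := by
          rw [Finset.sum_add_distrib, Finset.sum_sub_distrib, ← Finset.mul_sum,
            Finset.sum_const, Finset.card_univ, Fintype.card_fin, nsmul_eq_mul]
      _ ≤ (1 + s) * Nk - C * s + η := by linarith
      _ ≤ Nk + η := by nlinarith
  refine ⟨g, hcont, hg0, hgh, hfg, hmain.trans ?_⟩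
  have hone : (1:ℝ≥0∞) ≤ ENNReal.ofReal (1 + ε) := by
    rw [ENNReal.one_le_ofReal]
    linarith
  calc fblNormK E k f = 1 * fblNormK E k f := (one_mul _).symm
    _ ≤ ENNReal.ofReal (1 + ε) * fblNormK E k f := mul_le_mul_left hone _
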